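/- The matrix A with A(n,k) = C((n+k)/2, (n-k)/2) when n-k is even and A(n,k) = 0 when n-k is odd (for n ≥ k ≥ 0) is an SDR-matrix of order 3 but is not an SDR-matrix of order 4. -/

import Mathlib

/-- `A` is an SDR-matrix of order `m`: the generalized Star of David rule holds for
all `2 ≤ p ≤ m-1` and `0 ≤ r ≤ p-1`. -/
def IsSDR (m : ℕ) (A : ℕ → ℕ → ℕ) : Prop :=
  ∀ n k p r : ℕ, 2 ≤ p → p ≤ m - 1 → r ≤ p - 1 →
    (∏ i ∈ Finset.range (r+1), A (n+i) (k+r-i)) *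
      (∏ i ∈ Finset.range (p-r), A (n+p-i) (k+r+i+1)) =
    (∏ i ∈ Finset.range (r+1), A (n+p-i) (k+p-r+i)) *
      (∏ i ∈ Finset.range (p-r), A (n+i) (k+p-r-i-1))

private lemma aerated_key (a b : ℕ) :
    (if b ≤ a ∧ (a - b) % 2 = 0 then Nat.choose ((a+b)/2) ((a-b)/2) else 0) *
    (if b+1 ≤ a+2 ∧ (a+2 - (b+1)) % 2 = 0
      then Nat.choose ((a+2+(b+1))/2) ((a+2-(b+1))/2) else 0) = 0 := by
  by_cases h : b ≤ a ∧ (a - b) % 2 = 0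
  · have h2 : (a+1 - b) % 2 = 1 := by omega
    simp [h2]
  · simp [h]

private lemma mul3_eq {x y z u v w : ℕ} (h1 : x * y = 0) (h2 : u * v = 0) :
    x * (y * z) = v * (u * w) := by
  rw [← mul_assoc, h1, zero_mul, ← mul_assoc, mul_comm v u, h2, zero_mul]

private lemma mul3_eq' {x y z u v w : ℕ} (h1 : v * u = 0) (h2 : x * y = 0) :
    (v * z) * u = (y * w) * x := by
  rw [mul_right_comm, h1, zero_mul, mul_right_comm, mul_comm y x, h2, zero_mul]

theorem aerated_pascal_isSDR3_not_isSDR4 :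
    IsSDR 3 (fun n k => if k ≤ n ∧ (n - k) % 2 = 0
        then Nat.choose ((n+k)/2) ((n-k)/2) else 0) ∧
    ¬ IsSDR 4 (fun n k => if k ≤ n ∧ (n - k) % 2 = 0
        then Nat.choose ((n+k)/2) ((n-k)/2) else 0) := by
  constructor
  · intro n k p r hp hp' hr
    have hp2 : p = 2 := by omega
    subst hp2
    interval_cases r
    · simp only [show (2:ℕ)-0 = 2 from rfl, Finset.prod_range_succ,
        Finset.prod_range_one, Finset.prod_range_zero, one_mul]
      exact mul3_eq (aerated_key n k) (aerated_key n (k+1))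
    · simp only [show (2:ℕ)-1 = 1 from rfl, Finset.prod_range_succ,
        Finset.prod_range_one, Finset.prod_range_zero, one_mul]
      exact mul3_eq' (aerated_key n (k+1)) (aerated_key n k)
  · intro h
    exact absurd (h 2 0 3 0 (by norm_num) (by norm_num) (by norm_num)) (by decide)
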